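/- For 0 < t < x, Φ(-x) ≤ e^{-t(x-t) - (x-t)²/2} Φ(-t), and consequently ∫_t^∞ Φ^{1/2}(-x) dx ≤ Φ^{1/2}(-t) · min(2/t, √π). -/

import Mathlib

open MeasureTheory Set

noncomputable def stdPDF (x : ℝ) : ℝ := Real.exp (-x^2/2) / Real.sqrt (2*Real.pi)

noncomputable def stdCDF (t : ℝ) : ℝ := ∫ x in Set.Iic t, stdPDF x

lemma stdPDF_nonneg (x : ℝ) : 0 ≤ stdPDF x :=
  div_nonneg (Real.exp_nonneg _) (Real.sqrt_nonneg _)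

lemma stdPDF_integrable : Integrable stdPDF := by
  have h : Integrable (fun x : ℝ => Real.exp (-(1/2) * x ^ 2)) :=
    integrable_exp_neg_mul_sq (by norm_num)
  have he : stdPDF = fun x => Real.exp (-(1/2) * x^2) * (Real.sqrt (2*Real.pi))⁻¹ := by
    funext x
    unfold stdPDF
    rw [div_eq_mul_inv]
    congr 2
    ring
  rw [he]
  exact h.mul_const _

lemma stdCDF_nonneg (y : ℝ) : 0 ≤ stdCDF y :=
  setIntegral_nonneg measurableSet_Iic fun x _ => stdPDF_nonneg x

lemma stdCDF_shift (a c : ℝ) : ∫ u in Iic a, stdPDF (u + c) = stdCDF (a + c) := by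
  have h := (measurePreserving_add_right (volume : Measure ℝ) c).setIntegral_preimage_emb
    (measurableEmbedding_addRight c) stdPDF (Iic (a + c))
  have hpre : (fun x : ℝ => x + c) ⁻¹' Iic (a + c) = Iic a := by
    ext u; simp
  rw [hpre] at h
  exact h

lemma part1 (t x : ℝ) (ht : 0 < t) (hx : t < x) :
    stdCDF (-x) ≤ Real.exp (-t*(x-t) - (x-t)^2/2) * stdCDF (-t) := by
  have hshift : stdCDF (-x) = ∫ u in Iic (-t), stdPDF (u + (t - x)) := by
    rw [stdCDF_shift]
    congr 1
    ring
  rw [hshift, stdCDF, ← integral_const_mul]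
  apply setIntegral_mono_on
  · exact (stdPDF_integrable.comp_add_right (t - x)).integrableOn
  · exact (stdPDF_integrable.const_mul _).integrableOn
  · exact measurableSet_Iic
  · intro u hu
    simp only [Set.mem_Iic] at hu
    have h1 : Real.exp (-(u + (t - x))^2/2)
        ≤ Real.exp (-t*(x-t) - (x-t)^2/2) * Real.exp (-u^2/2) := by
      rw [← Real.exp_add]
      apply Real.exp_le_exp.2
      nlinarith [mul_nonneg (by linarith : (0:ℝ) ≤ -u - t) (by linarith : (0:ℝ) ≤ x - t)]
    calc stdPDF (u + (t-x)) = Real.exp (-(u+(t-x))^2/2) / Real.sqrt (2*Real.pi) := rfl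
    _ ≤ (Real.exp (-t*(x-t) - (x-t)^2/2) * Real.exp (-u^2/2)) / Real.sqrt (2*Real.pi) := by
        gcongr
    _ = Real.exp (-t*(x-t) - (x-t)^2/2) * stdPDF u := by
        unfold stdPDF; ring

lemma gauss_int (t : ℝ) :
    IntegrableOn (fun x => Real.exp (-(1/4) * (x - t)^2)) (Ioi t) :=
  ((integrable_exp_neg_mul_sq (by norm_num : (0:ℝ) < 1/4)).comp_sub_right t).integrableOn

lemma g_int (t : ℝ) (ht : 0 < t) :
    IntegrableOn (fun x => Real.exp (-t*(x-t)/2 - (x-t)^2/4)) (Ioi t) := by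
  apply Integrable.mono' (gauss_int t)
  · exact (Real.continuous_exp.comp (by continuity)).aestronglyMeasurable
  · filter_upwards [ae_restrict_mem measurableSet_Ioi] with x hx
    rw [Real.norm_eq_abs, abs_of_nonneg (Real.exp_nonneg _)]
    apply Real.exp_le_exp.2
    have h : t < x := hx
    nlinarith

lemma int_exp_lin (t : ℝ) (ht : 0 < t) :
    ∫ x in Ioi t, Real.exp (-(t/2)*(x - t)) = 2/t := by
  have hderiv : ∀ x ∈ Ioi t, HasDerivAt (fun x => -(2/t) * Real.exp (-(t/2)*(x-t)))
      (Real.exp (-(t/2)*(x-t))) x := by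
    intro x _
    have h1 : HasDerivAt (fun x : ℝ => -(t/2)*(x - t)) (-(t/2)) x := by
      simpa using ((hasDerivAt_id x).sub_const t).const_mul (-(t/2))
    have h2 := (h1.exp).const_mul (-(2/t))
    rw [show -(2/t) * (Real.exp (-(t/2)*(x-t)) * -(t/2)) = Real.exp (-(t/2)*(x-t)) * (2/t*(t/2)) by ring, show 2/t*(t/2) = (1:ℝ) by field_simp, mul_one] at h2
    exact h2
  have hint : IntegrableOn (fun x => Real.exp (-(t/2)*(x - t))) (Ioi t) := by
    apply IntegrableOn.congr_fun
      ((exp_neg_integrableOn_Ioi t (by positivity : (0:ℝ) < t/2)).const_mul (Real.exp (t*t/2)))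
      ?_ measurableSet_Ioi
    intro x _
    simp only
    rw [← Real.exp_add]; congr 1; ring
  have htend : Filter.Tendsto (fun x => -(2/t) * Real.exp (-(t/2)*(x-t)))
      Filter.atTop (nhds 0) := by
    have hl : Filter.Tendsto (fun x : ℝ => -(t/2)*(x-t)) Filter.atTop Filter.atBot := by
      apply Filter.Tendsto.const_mul_atTop_of_neg (by linarith)
      exact Filter.tendsto_atTop_add_const_right _ (-t) Filter.tendsto_id
    have := (Real.tendsto_exp_atBot.comp hl).const_mul (-(2/t))
    simpa using this
  have hc : ContinuousWithinAt (fun x => -(2/t) * Real.exp (-(t/2)*(x-t))) (Ici t) t :=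
    (Continuous.continuousWithinAt (by continuity))
  have := integral_Ioi_of_hasDerivAt_of_tendsto hc hderiv hint htend
  rw [this]
  norm_num

lemma int_gauss (t : ℝ) :
    ∫ x in Ioi t, Real.exp (-(1/4) * (x - t)^2) = Real.sqrt Real.pi := by
  have h := (measurePreserving_add_right (volume : Measure ℝ) t).setIntegral_preimage_emb
    (measurableEmbedding_addRight t) (fun x => Real.exp (-(1/4) * (x - t)^2)) (Ioi t)
  have hpre : (fun x : ℝ => x + t) ⁻¹' Ioi t = Ioi 0 := by ext u; simp
  rw [hpre] at h
  rw [← h]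
  simp only [add_sub_cancel_right]
  rw [integral_gaussian_Ioi]
  rw [show Real.pi/(1/4) = 2^2*Real.pi by ring, Real.sqrt_mul (by positivity),
    Real.sqrt_sq (by norm_num)]
  ring

lemma lin_int (t : ℝ) (ht : 0 < t) :
    IntegrableOn (fun x => Real.exp (-(t/2)*(x - t))) (Ioi t) := by
  apply IntegrableOn.congr_fun
    ((exp_neg_integrableOn_Ioi t (by positivity : (0:ℝ) < t/2)).const_mul (Real.exp (t*t/2)))
    ?_ measurableSet_Ioi
  intro x _
  simp only
  rw [← Real.exp_add]; congr 1; ring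

theorem stmt16 (t : ℝ) (ht : 0 < t) :
    (∀ x : ℝ, t < x →
      stdCDF (-x) ≤ Real.exp (-t*(x-t) - (x-t)^2/2) * stdCDF (-t)) ∧
    (∫ x in Set.Ioi t, Real.sqrt (stdCDF (-x))) ≤
      Real.sqrt (stdCDF (-t)) * min (2/t) (Real.sqrt Real.pi) := by
  refine ⟨fun x hx => part1 t x ht hx, ?_⟩
  have step1 : (∫ x in Ioi t, Real.sqrt (stdCDF (-x)))
      ≤ ∫ x in Ioi t, Real.sqrt (stdCDF (-t)) * Real.exp (-t*(x-t)/2 - (x-t)^2/4) := by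
    apply integral_mono_of_nonneg
    · exact Filter.Eventually.of_forall fun x => Real.sqrt_nonneg _
    · exact (g_int t ht).const_mul _
    · filter_upwards [ae_restrict_mem measurableSet_Ioi] with x hx
      calc Real.sqrt (stdCDF (-x))
          ≤ Real.sqrt (Real.exp (-t*(x-t) - (x-t)^2/2) * stdCDF (-t)) :=
            Real.sqrt_le_sqrt (part1 t x ht hx)
        _ = Real.exp ((-t*(x-t) - (x-t)^2/2)/2) * Real.sqrt (stdCDF (-t)) := by
            rw [Real.sqrt_mul (Real.exp_nonneg _), Real.exp_half]
        _ = Real.sqrt (stdCDF (-t)) * Real.exp (-t*(x-t)/2 - (x-t)^2/4) := by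
            rw [mul_comm]
            congr 1
            ring_nf
  rw [integral_const_mul] at step1
  have hJ1 : (∫ x in Ioi t, Real.exp (-t*(x-t)/2 - (x-t)^2/4)) ≤ 2/t := by
    have hmono : (∫ x in Ioi t, Real.exp (-t*(x-t)/2 - (x-t)^2/4))
        ≤ ∫ x in Ioi t, Real.exp (-(t/2)*(x - t)) := by
      apply integral_mono_of_nonneg
      · exact Filter.Eventually.of_forall fun x => Real.exp_nonneg _
      · exact lin_int t ht
      · refine Filter.Eventually.of_forall fun x => ?_
        apply Real.exp_le_exp.2
        nlinarith [sq_nonneg (x - t)]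
    calc _ ≤ _ := hmono
      _ = 2/t := int_exp_lin t ht
  have hJ2 : (∫ x in Ioi t, Real.exp (-t*(x-t)/2 - (x-t)^2/4)) ≤ Real.sqrt Real.pi := by
    have hmono : (∫ x in Ioi t, Real.exp (-t*(x-t)/2 - (x-t)^2/4))
        ≤ ∫ x in Ioi t, Real.exp (-(1/4) * (x - t)^2) := by
      apply integral_mono_of_nonneg
      · exact Filter.Eventually.of_forall fun x => Real.exp_nonneg _
      · exact gauss_int t
      · filter_upwards [ae_restrict_mem measurableSet_Ioi] with x hx
        apply Real.exp_le_exp.2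
        have h : t < x := hx
        nlinarith
    calc _ ≤ _ := hmono
      _ = Real.sqrt Real.pi := int_gauss t
  calc (∫ x in Set.Ioi t, Real.sqrt (stdCDF (-x)))
      ≤ Real.sqrt (stdCDF (-t)) * ∫ x in Ioi t, Real.exp (-t*(x-t)/2 - (x-t)^2/4) := step1
    _ ≤ Real.sqrt (stdCDF (-t)) * min (2/t) (Real.sqrt Real.pi) :=
        mul_le_mul_of_nonneg_left (le_min hJ1 hJ2) (Real.sqrt_nonneg _)
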